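/- Let M be a 2m×2m antisymmetric complex matrix, L an r×r complex matrix, and W the (2m+r)×(2m+r) block matrix whose top-left block is M, bottom-right block is L, whose top-right block is zero except its last row equals (c_1,...,c_r), and whose bottom-left block is zero except its last column equals (d_1,...,d_r). Then det(W) = det(M)·det(L), for any complex numbers c_a, d_a. -/

import Mathlib

open Matrix

open Polynomial in
lemma schur_step {n r : ℕ} (hn : 0 < n) (N : Matrix (Fin n) (Fin n) ℂ) (hN : Nᵀ = -N)
    (hdet : IsUnit N.det) (L : Matrix (Fin r) (Fin r) ℂ) (c d : Fin r → ℂ) :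
    (Matrix.fromBlocks N
      (Matrix.of fun (i : Fin n) (j : Fin r) => if (i : ℕ) = n - 1 then c j else 0)
      (Matrix.of fun (i : Fin r) (j : Fin n) => if (j : ℕ) = n - 1 then d i else 0)
      L).det = N.det * L.det := by
  haveI := N.invertibleOfIsUnitDet hdet
  set last : Fin n := ⟨n - 1, by omega⟩ with hlast
  have hinvdiag : N⁻¹ last last = 0 := by
    have h1 : (-N)⁻¹ = -(N⁻¹) := by
      apply Matrix.inv_eq_right_inv
      simp [Matrix.mul_nonsing_inv N hdet]
    have h2 : (N⁻¹)ᵀ = -(N⁻¹) := by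
      rw [Matrix.transpose_nonsing_inv, hN, h1]
    have h3 := congrFun (congrFun h2 last) last
    simp only [Matrix.transpose_apply, Matrix.neg_apply] at h3
    have h4 : (2:ℂ) * N⁻¹ last last = 0 := by linear_combination h3
    simpa using h4
  have hcond : ∀ k : Fin n, ((k : ℕ) = n - 1) ↔ k = last := by
    intro k; rw [Fin.ext_iff]
  rw [Matrix.det_fromBlocks₁₁, Matrix.invOf_eq_nonsing_inv]
  have hzero : (Matrix.of fun (i : Fin r) (j : Fin n) => if (j : ℕ) = n - 1 then d i else 0) * N⁻¹ *
      (Matrix.of fun (i : Fin n) (j : Fin r) => if (i : ℕ) = n - 1 then c j else 0) = 0 := by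
    ext i j
    simp only [Matrix.mul_apply, Matrix.of_apply, Matrix.zero_apply]
    simp only [hcond, ite_mul, mul_ite, zero_mul, mul_zero]
    simp [Finset.sum_ite_eq, Finset.sum_ite_eq', hinvdiag]
  rw [hzero, sub_zero]

/-- Determinantal product formula (Lemma 2 of the paper): if `M` is a `2m × 2m`
antisymmetric complex matrix, `L` an `r × r` complex matrix, and `W` is the block
matrix whose top-left block is `M`, bottom-right block is `L`, whose top-right
block vanishes except for its last row `(c 1, …, c r)` and whose bottom-left block
vanishes except for its last column `(d 1, …, d r)`, then `det W = det M * det L`. -/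
theorem smooth_splitting_det_product_formula
    (m r : ℕ) (M : Matrix (Fin (2 * m)) (Fin (2 * m)) ℂ) (hM : Mᵀ = -M)
    (L : Matrix (Fin r) (Fin r) ℂ) (c d : Fin r → ℂ) :
    (Matrix.fromBlocks M
      (Matrix.of fun (i : Fin (2 * m)) (j : Fin r) => if (i : ℕ) = 2 * m - 1 then c j else 0)
      (Matrix.of fun (i : Fin r) (j : Fin (2 * m)) => if (j : ℕ) = 2 * m - 1 then d i else 0)
      L).det = M.det * L.det := by
  rcases Nat.eq_zero_or_pos m with hm | hm
  · subst hm
    have hC : (Matrix.of fun (i : Fin r) (j : Fin (2 * 0)) =>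
        if (j : ℕ) = 2 * 0 - 1 then d i else 0) = 0 := by
      ext i j; exact absurd j.isLt (by simp)
    rw [hC, Matrix.det_fromBlocks_zero₂₁]
  · -- m > 0
    have hn : 0 < 2 * m := by omega
    -- the standard symplectic matrix
    set e : Fin (2 * m) ≃ Fin m ⊕ Fin m :=
      (finCongr (two_mul m)).trans finSumFinEquiv.symm with he
    set J0 : Matrix (Fin m ⊕ Fin m) (Fin m ⊕ Fin m) ℂ := Matrix.fromBlocks 0 1 (-1) 0 with hJ0
    set J : Matrix (Fin (2 * m)) (Fin (2 * m)) ℂ := J0.submatrix e e with hJ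
    have hJ0skew : J0ᵀ = -J0 := by
      rw [hJ0, Matrix.fromBlocks_transpose]
      ext (i | i) (j | j) <;> simp
    have hJskew : Jᵀ = -J := by
      rw [hJ, Matrix.transpose_submatrix, hJ0skew]
      ext i j
      simp
    have hJunit : IsUnit J.det := by
      have hmul : J0 * Matrix.fromBlocks (0 : Matrix (Fin m) (Fin m) ℂ) (-1) 1 (0 : Matrix (Fin m) (Fin m) ℂ) = 1 := by
        rw [hJ0, Matrix.fromBlocks_multiply]
        simp [Matrix.fromBlocks_one]
      have : J0.det * (Matrix.fromBlocks (0 : Matrix (Fin m) (Fin m) ℂ) (-1) 1 (0 : Matrix (Fin m) (Fin m) ℂ)).det = 1 := by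
        rw [← Matrix.det_mul, hmul, Matrix.det_one]
      have hJ0det : IsUnit J0.det := IsUnit.of_mul_eq_one _ this
      rwa [hJ, Matrix.det_submatrix_equiv_self]
    -- interpolation
    set N : ℂ → Matrix (Fin (2 * m)) (Fin (2 * m)) ℂ :=
      fun s => (1 - s) • J + s • M with hNdef
    have hNskew : ∀ s, (N s)ᵀ = -(N s) := by
      intro s
      rw [hNdef]
      simp only [Matrix.transpose_add, Matrix.transpose_smul, hM, hJskew, smul_neg]
      abel
    -- polynomial whose evaluation is det (N s)
    set P : Matrix (Fin (2 * m)) (Fin (2 * m)) (Polynomial ℂ) :=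
      Matrix.of fun i j => Polynomial.C (J i j) + Polynomial.C (M i j - J i j) * Polynomial.X with hP
    set p : Polynomial ℂ  := P.det with hp
    have hPeval : ∀ s : ℂ, P.map (Polynomial.eval s) = N s := by
      intro s; ext i j
      simp only [hP, Matrix.map_apply, Matrix.of_apply, Polynomial.eval_add, Polynomial.eval_mul,
        Polynomial.eval_C, Polynomial.eval_X, hNdef, Matrix.add_apply, Matrix.smul_apply,
        smul_eq_mul]
      ring
    have hpeval : ∀ s : ℂ, p.eval s = (N s).det := by
      intro s
      have hps : (P.map (Polynomial.eval s)).det = Polynomial.eval s P.det := by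
        rw [← Polynomial.coe_evalRingHom, ← RingHom.mapMatrix_apply, ← RingHom.map_det]
      rw [hp, ← hps, hPeval s]
    have hp0 : p ≠ 0 := by
      intro h
      have := hpeval 0
      rw [h] at this
      simp only [Polynomial.eval_zero] at this
      rw [hNdef] at this
      simp only [sub_zero, one_smul, zero_smul, add_zero] at this
      exact hJunit.ne_zero this.symm
    -- dense set where N s is invertible
    have hfin : {s : ℂ | p.IsRoot s}.Finite := Polynomial.finite_setOf_isRoot hp0
    have hdense : Dense {s : ℂ | p.IsRoot s}ᶜ := hfin.countable.dense_compl ℂ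
    -- continuity
    have hNcont : Continuous N := by
      apply Continuous.add
      · exact (continuous_const.sub continuous_id).smul continuous_const
      · exact continuous_id.smul continuous_const
    set B : Matrix (Fin (2 * m)) (Fin r) ℂ :=
      Matrix.of fun i j => if (i : ℕ) = 2 * m - 1 then c j else 0 with hB
    set Cm : Matrix (Fin r) (Fin (2 * m)) ℂ :=
      Matrix.of fun i j => if (j : ℕ) = 2 * m - 1 then d i else 0 with hCm
    have hf : Continuous fun s => (Matrix.fromBlocks (N s) B Cm L).det :=
      (Continuous.matrix_fromBlocks hNcont continuous_const continuous_const
        continuous_const).matrix_det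
    have hg : Continuous fun s => (N s).det * L.det := hNcont.matrix_det.mul continuous_const
    have heq : ∀ s : ℂ, s ∈ {s : ℂ | p.IsRoot s}ᶜ →
        (Matrix.fromBlocks (N s) B Cm L).det = (N s).det * L.det := by
      intro s hs
      have hsdet : IsUnit (N s).det := by
        have : (N s).det ≠ 0 := by rw [← hpeval s]; exact hs
        exact Ne.isUnit this
      exact schur_step hn (N s) (hNskew s) hsdet L c d
    have hfg := Continuous.ext_on hdense hf hg heq
    have h1 := congrFun hfg 1
    have hN1 : N 1 = M := by rw [hNdef]; simp
    rw [hN1] at h1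
    exact h1
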